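/- There is no deterministic finite state transducer T (even partial, reading input left-to-right with outputs on transitions) computing the function f on {a, b, c, d}* defined by f(abc) = ab and f(abd) = bd with aggregate cost at most 1 on both inputs; however, there is a transducer with regular lookahead computing f on these two inputs with aggregate cost 1 on each. In particular: any deterministic transducer T with T(abc) = ab and T(abd) = bd has aggregate cost at least 2 on at least one of the two inputs. -/

import Mathlib

/-- Levenshtein distance with unit costs (Mathlib's `levenshtein Levenshtein.defaultCost`,
removed from Mathlib; spelled out with the same recursion). -/
def unitLevenshtein {A : Type*} [DecidableEq A] : List A → List A → ℕ
  | [], ys => ys.length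
  | xs, [] => xs.length
  | x :: xs, y :: ys =>
      min (1 + unitLevenshtein xs (y :: ys))
        (min (1 + unitLevenshtein (x :: xs) ys)
          ((if x = y then 0 else 1) + unitLevenshtein xs ys))
termination_by xs ys => xs.length + ys.length

/-- Edit distance between two strings (lists), with unit insertion/deletion/substitution cost. -/
def ed {A : Type*} [DecidableEq A] (s t : List A) : ℕ :=
  unitLevenshtein s t


/-- A total finite state transducer. -/
structure FT (Q A : Type*) where
  step : Q → A → Q
  out : Q → A → List A
  start : Q

namespace FT

variable {Q A : Type*} (T : FT Q A)

/-- Extended state-transition function. -/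
def stepList : Q → List A → Q
  | q, [] => q
  | q, a :: u => stepList (T.step q a) u

/-- Extended output function. -/
def outList : Q → List A → List A
  | _, [] => []
  | q, a :: u => T.out q a ++ outList (T.step q a) u

/-- The output of the transducer on a word. -/
def output (w : List A) : List A := T.outList T.start w

/-- Aggregate cost of `T` on a word, starting from state `q`. -/
def aggCost [DecidableEq A] : Q → List A → ℕ
  | _, [] => 0
  | q, a :: u => ed [a] (T.out q a) + aggCost (T.step q a) u

end FT

/-- A transducer with regular lookahead: reads pairs of lookahead states and characters,
outputs strings of characters. -/
structure LFT (Q S A : Type*) where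
  step : Q → S × A → Q
  out : Q → S × A → List A
  start : Q

def LFT.outList {Q S A : Type*} (T : LFT Q S A) : Q → List (S × A) → List A
  | _, [] => []
  | q, p :: u => T.out q p ++ LFT.outList T (T.step q p) u

/-- The lookahead-annotated word: each character is paired with the state reached by `R`
on the reversed suffix following it. -/
def lookWord {A S : Type*} (R : DFA A S) (w : List A) : List (S × A) :=
  List.ofFn (fun i : Fin w.length => (R.evalFrom R.start ((w.drop (i + 1)).reverse), w[i]))

/-- Output of the transducer with lookahead `(T', R)` on `w`. -/
def lookOutput {Q S A : Type*} (R : DFA A S) (T' : LFT Q S A) (w : List A) : List A :=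
  T'.outList T'.start (lookWord R w)

def LFT.aggCost {Q S A : Type*} [DecidableEq A] (T : LFT Q S A) : Q → List (S × A) → ℕ
  | _, [] => 0
  | q, p :: u => ed [p.2] (T.out q p) + LFT.aggCost T (T.step q p) u

/-- Aggregate cost of a transducer with lookahead on `w`. -/
def lookAggCost {Q S A : Type*} [DecidableEq A]
    (R : DFA A S) (T' : LFT Q S A) (w : List A) : ℕ :=
  T'.aggCost T'.start (lookWord R w)

/-- With characters a = 0, b = 1, c = 2, d = 3: no deterministic transducer mapping
`abc ↦ ab` and `abd ↦ bd` has aggregate cost at most 1 on both inputs, but a transducer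
with regular lookahead achieves aggregate cost 1 on each. -/
theorem lookahead_beats_deterministic :
    (∀ (Q : Type) (T : FT Q (Fin 4)),
      T.output [0, 1, 2] = [0, 1] → T.output [0, 1, 3] = [1, 3] →
      2 ≤ T.aggCost T.start [0, 1, 2] ∨ 2 ≤ T.aggCost T.start [0, 1, 3]) ∧
    (∃ (S Q : Type) (R : DFA (Fin 4) S) (T' : LFT Q S (Fin 4)),
      lookOutput R T' [0, 1, 2] = [0, 1] ∧ lookOutput R T' [0, 1, 3] = [1, 3] ∧
      lookAggCost R T' [0, 1, 2] = 1 ∧ lookAggCost R T' [0, 1, 3] = 1) := by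
  constructor
  · intro Q T h1 h2
    left
    simp only [FT.output, FT.outList] at h1 h2
    -- The first two outputs are shared between the two runs.
    rcases hy0 : T.out T.start 0 with _ | ⟨x, y0⟩
    · rcases hy1 : T.out (T.step T.start 0) 1 with _ | ⟨z, y1⟩
      · simp only [FT.aggCost, hy0, hy1]
        have e0 : ed ([(0 : Fin 4)]) ([] : List (Fin 4)) = 1 := by simp [ed, unitLevenshtein]
        have e1 : ed ([(1 : Fin 4)]) ([] : List (Fin 4)) = 1 := by simp [ed, unitLevenshtein]
        rw [e0, e1]
        omega
      · rw [hy0, hy1] at h1 h2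
        simp only [List.nil_append, List.cons_append] at h1 h2
        have hx1 : z = 0 := (List.cons_eq_cons.mp h1).1
        have hx2 : z = 1 := (List.cons_eq_cons.mp h2).1
        rw [hx1] at hx2
        exact absurd hx2 (by decide)
    · rw [hy0] at h1 h2
      simp only [List.cons_append] at h1 h2
      have hx1 : x = 0 := (List.cons_eq_cons.mp h1).1
      have hx2 : x = 1 := (List.cons_eq_cons.mp h2).1
      rw [hx1] at hx2
      exact absurd hx2 (by decide)
  · -- Lookahead DFA: remembers whether the first letter read (= last letter of the
    -- original word) is `3`. Once `true`, stay `true`.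
    refine ⟨Bool, Unit,
      ⟨fun s a => s || (a == 3), false, ∅⟩,
      ⟨fun _ _ => (), fun _ p =>
        if p.2 = 0 then (if p.1 then [] else [0])
        else if p.2 = 2 then [] else [p.2], ()⟩, ?_, ?_, ?_, ?_⟩ <;> simp [lookOutput, lookAggCost, lookWord, LFT.outList, LFT.aggCost, ed, unitLevenshtein, DFA.evalFrom]
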